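/- For 1 < p ≤ 2 and ε ∈ [0,2], the modulus of convexity of L_p satisfies δ_p(ε) ≥ ((p-1)/8)·ε², i.e., for all f, g in L_p with ‖f‖_p ≤ 1, ‖g‖_p ≤ 1 and ‖f - g‖_p ≥ ε, one has ‖f + g‖_p ≤ 2 - ((p-1)/4)·ε². -/

import Mathlib

open MeasureTheory Set

/-- The real-valued `L_p` norm `‖f‖_p = (∫ |f|^p dμ)^{1/p}` (via `eLpNorm`). -/
noncomputable def LpNorm {Z : Type*} [MeasurableSpace Z] (μ : Measure Z)
    (f : Z → ℝ) (p : ℝ) : ℝ :=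
  (eLpNorm f (ENNReal.ofReal p) μ).toReal

open Real in
private lemma quad_le_avg {p : ℝ} (hp1 : 1 < p) (hp2 : p ≤ 2) {r : ℝ} (hr0 : 0 ≤ r)
    (hr1 : r ≤ 1) : 2 + p * (p - 1) * r ^ 2 ≤ (1 + r) ^ p + (1 - r) ^ p := by
  set φ : ℝ → ℝ := fun x => 1 * p * (1 + x) ^ (p - 1) + (-1) * p * (1 - x) ^ (p - 1)
      - 2 * p * (p - 1) * x with hφ
  set G : ℝ → ℝ := fun x => (1 + x) ^ p + (1 - x) ^ p - (2 + p * (p - 1) * x ^ 2) with hG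
  have hp0 : (0:ℝ) < p := by linarith
  -- derivative of G is φ
  have hGderiv : ∀ x : ℝ, HasDerivAt G (φ x) x := by
    intro x
    have h1 : HasDerivAt (fun x : ℝ => (1 + x) ^ p) (1 * p * (1 + x) ^ (p - 1)) x :=
      (((hasDerivAt_id x).const_add 1)).rpow_const (Or.inr hp1.le)
    have h2 : HasDerivAt (fun x : ℝ => (1 - x) ^ p) ((-1) * p * (1 - x) ^ (p - 1)) x :=
      (((hasDerivAt_id x).const_sub 1)).rpow_const (Or.inr hp1.le)
    have h3 : HasDerivAt (fun x : ℝ => 2 + p * (p - 1) * x ^ 2)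
        (2 * p * (p - 1) * x) x := by
      have := ((hasDerivAt_pow 2 x).const_mul (p * (p - 1))).const_add 2
      exact this.congr_deriv (by push_cast; ring)
    exact (h1.add h2).sub h3
  -- second derivative of G (= deriv of φ) is nonneg on (0,1)
  have hφderiv : ∀ x ∈ Ioo (0:ℝ) 1, HasDerivAt φ
      (p * (p - 1) * ((1 + x) ^ (p - 2) + (1 - x) ^ (p - 2) - 2)) x := by
    intro x hx
    have e1 : HasDerivAt (fun x : ℝ => (1 + x) ^ (p - 1)) (1 * (p - 1) * (1 + x) ^ (p - 1 - 1)) x :=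
      (((hasDerivAt_id x).const_add 1)).rpow_const (Or.inl (by nlinarith [hx.1] : (1:ℝ) + x ≠ 0))
    have e2 : HasDerivAt (fun x : ℝ => (1 - x) ^ (p - 1))
        ((-1) * (p - 1) * (1 - x) ^ (p - 1 - 1)) x :=
      (((hasDerivAt_id x).const_sub 1)).rpow_const (Or.inl (by nlinarith [hx.2] : (1:ℝ) - x ≠ 0))
    have e3 : HasDerivAt (fun x : ℝ => 2 * p * (p - 1) * x) (2 * p * (p - 1)) x := by
      simpa using (hasDerivAt_id x).const_mul (2 * p * (p - 1))
    have := ((e1.const_mul (1 * p)).add (e2.const_mul ((-1) * p))).sub e3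
    have h11 : p - 1 - 1 = p - 2 := by ring
    rw [h11] at this
    exact this.congr_deriv (by ring)
  -- second derivative nonneg
  have hsecond : ∀ x ∈ Ioo (0:ℝ) 1,
      0 ≤ p * (p - 1) * ((1 + x) ^ (p - 2) + (1 - x) ^ (p - 2) - 2) := by
    intro x hx
    have hx1 : (0:ℝ) < 1 + x := by nlinarith [hx.1]
    have hx2 : (0:ℝ) < 1 - x := by nlinarith [hx.2]
    have hX : (0:ℝ) < (1 + x) ^ (p - 2) := rpow_pos_of_pos hx1 _
    have hY : (0:ℝ) < (1 - x) ^ (p - 2) := rpow_pos_of_pos hx2 _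
    have hXY : (1:ℝ) ≤ (1 + x) ^ (p - 2) * (1 - x) ^ (p - 2) := by
      rw [← Real.mul_rpow hx1.le hx2.le]
      have h01 : 0 < (1 + x) * (1 - x) := mul_pos hx1 hx2
      have h1 : (1 + x) * (1 - x) ≤ 1 := by nlinarith [hx.1, hx.2]
      exact Real.one_le_rpow_of_pos_of_le_one_of_nonpos h01 h1 (by linarith)
    have key : 2 ≤ (1 + x) ^ (p - 2) + (1 - x) ^ (p - 2) := by
      have hmul : Real.sqrt ((1+x)^(p-2)) * Real.sqrt ((1-x)^(p-2))
          = Real.sqrt ((1+x)^(p-2) * (1-x)^(p-2)) := (Real.sqrt_mul hX.le _).symm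
      have hs1 : 1 ≤ Real.sqrt ((1+x)^(p-2) * (1-x)^(p-2)) := by
        have := Real.sqrt_le_sqrt hXY
        rwa [Real.sqrt_one] at this
      nlinarith [sq_nonneg (Real.sqrt ((1+x)^(p-2)) - Real.sqrt ((1-x)^(p-2))),
        Real.sq_sqrt hX.le, Real.sq_sqrt hY.le]
    have : 0 ≤ p * (p - 1) := by nlinarith
    nlinarith
  -- φ is monotone on [0,1]
  have hφcont : ContinuousOn φ (Icc (0:ℝ) 1) := by
    have c1 : ContinuousOn (fun x : ℝ => (1 + x) ^ (p - 1)) (Icc (0:ℝ) 1) :=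
      (continuousOn_const.add continuousOn_id).rpow_const (fun x hx => Or.inr (by linarith))
    have c2 : ContinuousOn (fun x : ℝ => (1 - x) ^ (p - 1)) (Icc (0:ℝ) 1) :=
      (continuousOn_const.sub continuousOn_id).rpow_const (fun x hx => Or.inr (by linarith))
    exact ((c1.const_smul (1 * p)).add (c2.const_smul ((-1) * p))).sub
      (continuousOn_const.mul continuousOn_id)
  have hφmono : MonotoneOn φ (Icc 0 1) := by
    apply monotoneOn_of_deriv_nonneg (convex_Icc 0 1) hφcont
    · intro x hx
      rw [interior_Icc] at hx
      exact (hφderiv x hx).differentiableAt.differentiableWithinAt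
    · intro x hx
      rw [interior_Icc] at hx
      rw [(hφderiv x hx).deriv]
      exact hsecond x hx
  -- hence φ ≥ 0 on [0,1]
  have hφ0 : φ 0 = 0 := by simp [hφ]
  have hφnonneg : ∀ x ∈ Icc (0:ℝ) 1, 0 ≤ φ x := by
    intro x hx
    have := hφmono (left_mem_Icc.2 zero_le_one) hx hx.1
    rwa [hφ0] at this
  -- G is monotone on [0,1]
  have hGmono : MonotoneOn G (Icc 0 1) := by
    apply monotoneOn_of_deriv_nonneg (convex_Icc 0 1)
      (fun x _ => ((hGderiv x).continuousAt.continuousWithinAt))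
    · intro x hx
      exact (hGderiv x).differentiableAt.differentiableWithinAt
    · intro x hx
      rw [interior_Icc] at hx
      rw [(hGderiv x).deriv]
      exact hφnonneg x (Ioo_subset_Icc_self hx)
  have hG0 : G 0 = 0 := by norm_num [hG]
  have := hGmono (left_mem_Icc.2 zero_le_one) (mem_Icc.2 ⟨hr0, hr1⟩) hr0
  rw [hG0] at this
  simp only [hG] at this
  linarith

private lemma ratio_ineq {p : ℝ} (hp1 : 1 < p) (hp2 : p ≤ 2) {r : ℝ} (hr0 : 0 ≤ r)
    (hr1 : r ≤ 1) :
    (1 + (p - 1) * r ^ 2) ^ (p / 2) ≤ ((1 + r) ^ p + (1 - r) ^ p) / 2 := by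
  have h1 : (1 + (p - 1) * r ^ 2) ^ (p / 2) ≤ 1 + p / 2 * ((p - 1) * r ^ 2) := by
    apply rpow_one_add_le_one_add_mul_self
    · nlinarith
    · linarith
    · linarith
  have h2 := quad_le_avg hp1 hp2 hr0 hr1
  linarith

private lemma core_ineq {p : ℝ} (hp1 : 1 < p) (hp2 : p ≤ 2) {u v : ℝ} (hv : 0 ≤ v)
    (huv : v ≤ u) :
    (u ^ 2 + (p - 1) * v ^ 2) ^ (p / 2) ≤ ((u + v) ^ p + (u - v) ^ p) / 2 := by
  have hu : 0 ≤ u := hv.trans huv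
  rcases eq_or_lt_of_le hu with h | hupos
  · have hv0 : v = 0 := le_antisymm (by linarith) hv
    subst hv0
    rw [← h]
    norm_num
    rw [Real.zero_rpow (by positivity), Real.zero_rpow (by positivity)]
  set r := v / u with hr
  have hr0 : 0 ≤ r := div_nonneg hv hupos.le
  have hr1 : r ≤ 1 := (div_le_one hupos).2 huv
  have hv' : v = r * u := by rw [hr, div_mul_cancel₀ v hupos.ne']
  have key := ratio_ineq hp1 hp2 hr0 hr1
  have hu2 : (0:ℝ) ≤ 1 + (p-1) * r^2 := by nlinarith
  have lhs_eq : (u ^ 2 + (p - 1) * v ^ 2) ^ (p / 2)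
      = u ^ p * (1 + (p - 1) * r ^ 2) ^ (p / 2) := by
    have : u ^ 2 + (p - 1) * v ^ 2 = u ^ 2 * (1 + (p - 1) * r ^ 2) := by
      rw [hv']; ring
    rw [this, Real.mul_rpow (by positivity) hu2]
    congr 1
    rw [← Real.rpow_natCast u 2, ← Real.rpow_mul hupos.le, show ((2:ℕ):ℝ) * (p/2) = p by push_cast; ring]
  have rhs1 : (u + v) ^ p = u ^ p * (1 + r) ^ p := by
    rw [← Real.mul_rpow hupos.le (by linarith), hv']; ring_nf
  have rhs2 : (u - v) ^ p = u ^ p * (1 - r) ^ p := by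
    rw [← Real.mul_rpow hupos.le (by linarith), hv']; ring_nf
  rw [lhs_eq, rhs1, rhs2]
  have hup : 0 ≤ u ^ p := Real.rpow_nonneg hupos.le p
  calc u ^ p * (1 + (p - 1) * r ^ 2) ^ (p / 2)
      ≤ u ^ p * (((1 + r) ^ p + (1 - r) ^ p) / 2) := by
        exact mul_le_mul_of_nonneg_left key hup
    _ = (u ^ p * (1 + r) ^ p + u ^ p * (1 - r) ^ p) / 2 := by ring

private lemma sym0_ineq {p : ℝ} (hp1 : 1 < p) (hp2 : p ≤ 2) {u v : ℝ} (hu : 0 ≤ u)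
    (hv : 0 ≤ v) :
    (u ^ 2 + (p - 1) * v ^ 2) ^ (p / 2) ≤ ((u + v) ^ p + |u - v| ^ p) / 2 := by
  rcases le_total v u with h | h
  · rw [abs_of_nonneg (by linarith)]
    exact core_ineq hp1 hp2 hv h
  · rw [abs_of_nonpos (by linarith)]
    have := core_ineq hp1 hp2 hu h
    calc (u ^ 2 + (p - 1) * v ^ 2) ^ (p / 2)
        ≤ (v ^ 2 + (p - 1) * u ^ 2) ^ (p / 2) := by
          apply Real.rpow_le_rpow (by nlinarith) _ (by positivity)
          nlinarith [mul_nonneg (mul_nonneg (sub_nonneg.2 h) (by linarith : (0:ℝ) ≤ v + u))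
            (by linarith : (0:ℝ) ≤ 2 - p)]
      _ ≤ ((v + u) ^ p + (v - u) ^ p) / 2 := this
      _ = ((u + v) ^ p + (-(u - v)) ^ p) / 2 := by ring_nf

private lemma sym_ineq {p : ℝ} (hp1 : 1 < p) (hp2 : p ≤ 2) (u v : ℝ) :
    (u ^ 2 + (p - 1) * v ^ 2) ^ (p / 2) ≤ (|u + v| ^ p + |u - v| ^ p) / 2 := by
  rcases le_total 0 u with hu | hu <;> rcases le_total 0 v with hv | hv
  · have := sym0_ineq hp1 hp2 hu hv
    calc (u ^ 2 + (p - 1) * v ^ 2) ^ (p / 2)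
        ≤ ((u + v) ^ p + |u - v| ^ p) / 2 := this
      _ = (|u + v| ^ p + |u - v| ^ p) / 2 := by rw [abs_of_nonneg (add_nonneg hu hv)]
  · have := sym0_ineq hp1 hp2 hu (neg_nonneg.2 hv)
    calc (u ^ 2 + (p - 1) * v ^ 2) ^ (p / 2)
        = (u ^ 2 + (p - 1) * (-v) ^ 2) ^ (p / 2) := by ring_nf
      _ ≤ ((u + -v) ^ p + |u - -v| ^ p) / 2 := this
      _ = (|u + v| ^ p + |u - v| ^ p) / 2 := by
          rw [show u + -v = u - v by ring, show u - -v = u + v by ring,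
            abs_of_nonneg (by linarith : (0:ℝ) ≤ u - v), add_comm (|u + v| ^ p)]
  · have := sym0_ineq hp1 hp2 (neg_nonneg.2 hu) hv
    calc (u ^ 2 + (p - 1) * v ^ 2) ^ (p / 2)
        = ((-u) ^ 2 + (p - 1) * v ^ 2) ^ (p / 2) := by ring_nf
      _ ≤ ((-u + v) ^ p + |-u - v| ^ p) / 2 := this
      _ = (|u + v| ^ p + |u - v| ^ p) / 2 := by
          rw [show -u - v = -(u + v) by ring, abs_neg,
            show (-u + v) ^ p = |-(u - v)| ^ p by rw [abs_of_nonneg (by linarith)]; ring_nf,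
            abs_neg, add_comm (|u + v| ^ p)]
  · have := sym0_ineq hp1 hp2 (neg_nonneg.2 hu) (neg_nonneg.2 hv)
    calc (u ^ 2 + (p - 1) * v ^ 2) ^ (p / 2)
        = ((-u) ^ 2 + (p - 1) * (-v) ^ 2) ^ (p / 2) := by ring_nf
      _ ≤ ((-u + -v) ^ p + |-u - -v| ^ p) / 2 := this
      _ = (|u + v| ^ p + |u - v| ^ p) / 2 := by
          rw [show -u + -v = -(u + v) by ring, show -u - -v = -(u - v) by ring, abs_neg,
            show (-(u + v)) ^ p = |-(u + v)| ^ p by rw [abs_of_nonneg (by linarith)],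
            abs_neg]

private lemma pointwise_ineq {p : ℝ} (hp1 : 1 < p) (hp2 : p ≤ 2) (a b : ℝ) :
    (((a + b) / 2) ^ 2 + (p - 1) * ((a - b) / 2) ^ 2) ^ (p / 2)
      ≤ (|a| ^ p + |b| ^ p) / 2 := by
  have := sym_ineq hp1 hp2 ((a + b) / 2) ((a - b) / 2)
  rw [show (a + b) / 2 + (a - b) / 2 = a by ring, show (a + b) / 2 - (a - b) / 2 = b by ring]
    at this
  exact this

open MeasureTheory in
private lemma superadd {Z : Type*} [MeasurableSpace Z] (μ : Measure Z) {X Y : Z → ℝ} {q : ℝ}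
    (hq0 : 0 < q) (hq1 : q ≤ 1)
    (hX0 : ∀ z, 0 ≤ X z) (hY0 : ∀ z, 0 ≤ Y z)
    (hXi : Integrable (fun z => X z ^ q) μ) (hYi : Integrable (fun z => Y z ^ q) μ)
    (hXYi : Integrable (fun z => (X z + Y z) ^ q) μ) :
    (∫ z, X z ^ q ∂μ) ^ (1/q) + (∫ z, Y z ^ q ∂μ) ^ (1/q)
      ≤ (∫ z, (X z + Y z) ^ q ∂μ) ^ (1/q) := by
  set IX := ∫ z, X z ^ q ∂μ with hIX
  set IY := ∫ z, Y z ^ q ∂μ with hIY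
  set IS := ∫ z, (X z + Y z) ^ q ∂μ with hIS
  have hIX0 : 0 ≤ IX := integral_nonneg fun z => Real.rpow_nonneg (hX0 z) q
  have hIY0 : 0 ≤ IY := integral_nonneg fun z => Real.rpow_nonneg (hY0 z) q
  have hXle : IX ≤ IS := integral_mono hXi hXYi fun z =>
    Real.rpow_le_rpow (hX0 z) (by linarith [hY0 z]) hq0.le
  have hYle : IY ≤ IS := integral_mono hYi hXYi fun z =>
    Real.rpow_le_rpow (hY0 z) (by linarith [hX0 z]) hq0.le
  have hIS0 : 0 ≤ IS := hIX0.trans hXle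
  rcases eq_or_lt_of_le hIX0 with hx0 | hx0
  · rw [← hx0, Real.zero_rpow (by positivity)]
    rw [zero_add]
    exact Real.rpow_le_rpow hIY0 hYle (by positivity)
  rcases eq_or_lt_of_le hIY0 with hy0 | hy0
  · rw [← hy0, Real.zero_rpow (by positivity), add_zero]
    exact Real.rpow_le_rpow hIX0 hXle (by positivity)
  -- main case
  set a := IX ^ (1/q) with ha
  set b := IY ^ (1/q) with hb
  have ha0 : 0 < a := Real.rpow_pos_of_pos hx0 _
  have hb0 : 0 < b := Real.rpow_pos_of_pos hy0 _
  have hab : 0 < a + b := by linarith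
  have haq : a ^ q = IX := by
    rw [ha, ← Real.rpow_mul hIX0, one_div, inv_mul_cancel₀ hq0.ne', Real.rpow_one]
  have hbq : b ^ q = IY := by
    rw [hb, ← Real.rpow_mul hIY0, one_div, inv_mul_cancel₀ hq0.ne', Real.rpow_one]
  set lam := a / (a + b) with hlam
  have hlam0 : 0 ≤ lam := by positivity
  have hlam1 : 0 ≤ 1 - lam := by
    rw [hlam, sub_nonneg, div_le_one hab]; linarith
  have hlamsum : lam + (1 - lam) = 1 := by ring
  have C := Real.concaveOn_rpow hq0.le hq1
  -- pointwise concavity bound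
  have key : ∀ z, lam * (X z / a) ^ q + (1 - lam) * (Y z / b) ^ q
      ≤ ((X z + Y z) / (a + b)) ^ q := by
    intro z
    have h1 : X z / a ∈ Set.Ici (0:ℝ) := Set.mem_Ici.2 (div_nonneg (hX0 z) ha0.le)
    have h2 : Y z / b ∈ Set.Ici (0:ℝ) := Set.mem_Ici.2 (div_nonneg (hY0 z) hb0.le)
    have := C.2 h1 h2 hlam0 hlam1 hlamsum
    simp only [smul_eq_mul] at this
    have heq : lam * (X z / a) + (1 - lam) * (Y z / b) = (X z + Y z) / (a + b) := by
      rw [hlam]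
      field_simp
      ring
    rwa [heq] at this
  -- integrate
  have int_lhs : Integrable (fun z => lam * (X z / a) ^ q + (1 - lam) * (Y z / b) ^ q) μ := by
    have e1 : (fun z => lam * (X z / a) ^ q) = fun z => (lam / a ^ q) * X z ^ q := by
      funext z
      rw [Real.div_rpow (hX0 z) ha0.le]
      ring
    have e2 : (fun z => (1 - lam) * (Y z / b) ^ q) = fun z => ((1 - lam) / b ^ q) * Y z ^ q := by
      funext z
      rw [Real.div_rpow (hY0 z) hb0.le]
      ring
    rw [show (fun z => lam * (X z / a) ^ q + (1 - lam) * (Y z / b) ^ q)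
      = (fun z => (lam / a ^ q) * X z ^ q + ((1 - lam) / b ^ q) * Y z ^ q) by
        funext z; rw [Real.div_rpow (hX0 z) ha0.le, Real.div_rpow (hY0 z) hb0.le]; ring]
    exact (hXi.const_mul _).add (hYi.const_mul _)
  have int_rhs : Integrable (fun z => ((X z + Y z) / (a + b)) ^ q) μ := by
    rw [show (fun z => ((X z + Y z) / (a + b)) ^ q)
      = (fun z => (1 / (a + b) ^ q) * (X z + Y z) ^ q) by
        funext z; rw [Real.div_rpow (by linarith [hX0 z, hY0 z]) hab.le]; ring]
    exact hXYi.const_mul _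
  have hint := integral_mono int_lhs int_rhs key
  -- compute both sides
  have lhs_eq : ∫ z, (lam * (X z / a) ^ q + (1 - lam) * (Y z / b) ^ q) ∂μ = 1 := by
    rw [show (fun z => lam * (X z / a) ^ q + (1 - lam) * (Y z / b) ^ q)
      = (fun z => (lam / a ^ q) * X z ^ q + ((1 - lam) / b ^ q) * Y z ^ q) by
        funext z; rw [Real.div_rpow (hX0 z) ha0.le, Real.div_rpow (hY0 z) hb0.le]; ring]
    rw [integral_add (hXi.const_mul _) (hYi.const_mul _), integral_const_mul,
      integral_const_mul, ← hIX, ← hIY, ← haq, ← hbq]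
    have haq0 : a ^ q ≠ 0 := by positivity
    have hbq0 : b ^ q ≠ 0 := by positivity
    field_simp [hlam]
    ring
  have rhs_eq : ∫ z, ((X z + Y z) / (a + b)) ^ q ∂μ = IS / (a + b) ^ q := by
    rw [show (fun z => ((X z + Y z) / (a + b)) ^ q)
      = (fun z => (1 / (a + b) ^ q) * (X z + Y z) ^ q) by
        funext z; rw [Real.div_rpow (by linarith [hX0 z, hY0 z]) hab.le]; ring]
    rw [integral_const_mul, ← hIS]
    ring
  rw [lhs_eq, rhs_eq] at hint
  have habq : (a + b) ^ q ≤ IS := by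
    rw [le_div_iff₀ (by positivity : (0:ℝ) < (a + b) ^ q)] at hint
    linarith [hint]
  calc a + b = ((a + b) ^ q) ^ (1/q) := by
        rw [← Real.rpow_mul hab.le, mul_one_div, div_self hq0.ne', Real.rpow_one]
    _ ≤ IS ^ (1/q) := Real.rpow_le_rpow (by positivity) habq (by positivity)

private lemma sq_rpow_half {p : ℝ} (x : ℝ) : (x ^ 2) ^ (p/2) = |x| ^ p := by
  rw [← sq_abs, ← Real.rpow_natCast |x| 2, ← Real.rpow_mul (abs_nonneg x),
    show ((2:ℕ):ℝ) * (p/2) = p by push_cast; ring]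


set_option maxHeartbeats 2000000 in
open MeasureTheory in
/-- For `1 < p ≤ 2` and `ε ∈ [0,2]`, the modulus of convexity of `L_p` satisfies
`δ_p(ε) ≥ ((p-1)/8) ε²`: for `f, g` in the unit ball of `L_p` with `‖f - g‖_p ≥ ε`,
one has `‖f + g‖_p ≤ 2 - ((p-1)/4) ε²`. -/
theorem lp_modulus_convexity_small_p
    {Z : Type*} [MeasurableSpace Z] (μ : Measure Z)
    (p ε : ℝ) (hp1 : 1 < p) (hp2 : p ≤ 2) (hε0 : 0 ≤ ε) (hε2 : ε ≤ 2)
    (f g : Z → ℝ)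
    (hf : MemLp f (ENNReal.ofReal p) μ) (hg : MemLp g (ENNReal.ofReal p) μ)
    (hfb : LpNorm μ f p ≤ 1) (hgb : LpNorm μ g p ≤ 1)
    (hdist : ε ≤ LpNorm μ (f - g) p) :
    LpNorm μ (f + g) p ≤ 2 - (p - 1) / 4 * ε ^ 2 := by
  have hp0 : (0:ℝ) < p := by linarith
  have hq0 : ENNReal.ofReal p ≠ 0 := by
    simp only [ne_eq, ENNReal.ofReal_eq_zero, not_le]; linarith
  have hqt : ENNReal.ofReal p ≠ ⊤ := ENNReal.ofReal_ne_top
  have hqr : (ENNReal.ofReal p).toReal = p := ENNReal.toReal_ofReal hp0.le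
  have norm_eq : ∀ h : Z → ℝ, MemLp h (ENNReal.ofReal p) μ →
      LpNorm μ h p = (∫ z, |h z| ^ p ∂μ) ^ (1/p) := by
    intro h hh
    rw [LpNorm, hh.eLpNorm_eq_integral_rpow_norm hq0 hqt, hqr,
      ENNReal.toReal_ofReal (Real.rpow_nonneg
        (integral_nonneg fun z => Real.rpow_nonneg (norm_nonneg _) p) _)]
    simp only [Real.norm_eq_abs, one_div]
  have int_rp : ∀ h : Z → ℝ, MemLp h (ENNReal.ofReal p) μ →
      Integrable (fun z => |h z| ^ p) μ := by
    intro h hh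
    have := hh.integrable_norm_rpow hq0 hqt
    rw [hqr] at this
    simpa only [Real.norm_eq_abs] using this
  have hfi := int_rp f hf
  have hgi := int_rp g hg
  have hSi := int_rp (f + g) (hf.add hg)
  have hDi := int_rp (f - g) (hf.sub hg)
  simp only [Pi.add_apply, Pi.sub_apply] at hSi hDi
  -- the two component functions
  set X : Z → ℝ := fun z => ((f z + g z) / 2) ^ 2 with hX
  set Y : Z → ℝ := fun z => (p - 1) * ((f z - g z) / 2) ^ 2 with hY
  have hX0 : ∀ z, 0 ≤ X z := fun z => sq_nonneg _
  have hY0 : ∀ z, 0 ≤ Y z := fun z => mul_nonneg (by linarith) (sq_nonneg _)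
  have hp10 : (0:ℝ) ≤ p - 1 := by linarith
  have hXq : ∀ z, X z ^ (p/2) = |f z + g z| ^ p / 2 ^ p := by
    intro z
    rw [hX, sq_rpow_half, abs_div, abs_two, Real.div_rpow (abs_nonneg _) (by norm_num)]
  have hYq : ∀ z, Y z ^ (p/2) = (p - 1) ^ (p/2) * (|f z - g z| ^ p / 2 ^ p) := by
    intro z
    rw [hY, Real.mul_rpow hp10 (sq_nonneg _), sq_rpow_half, abs_div, abs_two,
      Real.div_rpow (abs_nonneg _) (by norm_num)]
  have hXi : Integrable (fun z => X z ^ (p/2)) μ := by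
    rw [show (fun z => X z ^ (p/2)) = fun z => |f z + g z| ^ p / 2 ^ p from funext hXq]
    exact hSi.div_const _
  have hYi : Integrable (fun z => Y z ^ (p/2)) μ := by
    rw [show (fun z => Y z ^ (p/2)) = fun z => (p - 1) ^ (p/2) * (|f z - g z| ^ p / 2 ^ p)
      from funext hYq]
    exact (hDi.div_const _).const_mul _
  -- pointwise bound for the sum
  have hpt : ∀ z, (X z + Y z) ^ (p/2) ≤ (|f z| ^ p + |g z| ^ p) / 2 := fun z =>
    pointwise_ineq hp1 hp2 (f z) (g z)
  have hXYm : AEStronglyMeasurable (fun z => (X z + Y z) ^ (p/2)) μ := by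
    have hfm := hf.aestronglyMeasurable.aemeasurable
    have hgm := hg.aestronglyMeasurable.aemeasurable
    exact ((((((hfm.add hgm).div_const 2).pow_const 2).add
      ((((hfm.sub hgm).div_const 2).pow_const 2).const_mul (p - 1)))).pow_const
      (p/2)).aestronglyMeasurable
  have hXYi : Integrable (fun z => (X z + Y z) ^ (p/2)) μ := by
    apply Integrable.mono' (((hfi.add hgi).div_const 2)) hXYm
    filter_upwards with z
    rw [Real.norm_eq_abs, abs_of_nonneg (Real.rpow_nonneg
      (by positivity) _)]
    exact hpt z
  -- superadditivity
  have hsup := superadd μ (by linarith : (0:ℝ) < p/2) (by linarith : p/2 ≤ 1)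
    hX0 hY0 hXi hYi hXYi
  rw [one_div_div] at hsup
  -- rewrite the three integrals
  set IS := ∫ z, |f z + g z| ^ p ∂μ with hIS
  set ID := ∫ z, |f z - g z| ^ p ∂μ with hID
  have hIS0 : 0 ≤ IS := integral_nonneg fun z => Real.rpow_nonneg (abs_nonneg _) p
  have hID0 : 0 ≤ ID := integral_nonneg fun z => Real.rpow_nonneg (abs_nonneg _) p
  have h2p0 : (0:ℝ) ≤ 2 ^ p := Real.rpow_nonneg (by norm_num) p
  have e1 : ∫ z, X z ^ (p/2) ∂μ = IS / 2 ^ p := by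
    simp only [hXq]
    rw [integral_div]
  have e2 : ∫ z, Y z ^ (p/2) ∂μ = (p - 1) ^ (p/2) * (ID / 2 ^ p) := by
    simp only [hYq]
    rw [integral_const_mul, integral_div]
  rw [e1, e2] at hsup
  have h2p4 : ((2:ℝ) ^ p) ^ (2/p) = 4 := by
    rw [← Real.rpow_mul (by norm_num : (0:ℝ) ≤ 2), show p * (2/p) = 2 by field_simp,
      show (2:ℝ) = ((2:ℕ):ℝ) by norm_num, Real.rpow_natCast]
    norm_num
  have t1 : (IS / 2 ^ p) ^ (2/p) = IS ^ (2/p) / 4 := by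
    rw [Real.div_rpow hIS0 h2p0, h2p4]
  have t2 : ((p - 1) ^ (p/2) * (ID / 2 ^ p)) ^ (2/p) = (p - 1) * (ID ^ (2/p) / 4) := by
    rw [Real.mul_rpow (Real.rpow_nonneg hp10 _) (div_nonneg hID0 h2p0),
      ← Real.rpow_mul hp10, show p/2 * (2/p) = 1 by field_simp, Real.rpow_one,
      Real.div_rpow hID0 h2p0, h2p4]
  rw [t1, t2] at hsup
  -- right-hand side is at most 1
  have int_le_one : ∀ h : Z → ℝ, MemLp h (ENNReal.ofReal p) μ → LpNorm μ h p ≤ 1 →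
      ∫ z, |h z| ^ p ∂μ ≤ 1 := by
    intro h hh hb
    rw [norm_eq h hh] at hb
    have h0 : 0 ≤ ∫ z, |h z| ^ p ∂μ := integral_nonneg fun z => Real.rpow_nonneg (abs_nonneg _) p
    have := Real.rpow_le_rpow (Real.rpow_nonneg h0 _) hb hp0.le
    rwa [← Real.rpow_mul h0, one_div, inv_mul_cancel₀ hp0.ne', Real.rpow_one,
      Real.one_rpow] at this
  have hIf1 := int_le_one f hf hfb
  have hIg1 := int_le_one g hg hgb
  have hRHS : (∫ z, (X z + Y z) ^ (p/2) ∂μ) ^ (2/p) ≤ 1 := by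
    apply Real.rpow_le_one (integral_nonneg fun z => Real.rpow_nonneg (by positivity) _)
      _ (by positivity)
    calc ∫ z, (X z + Y z) ^ (p/2) ∂μ
        ≤ ∫ z, (|f z| ^ p + |g z| ^ p) / 2 ∂μ :=
          integral_mono hXYi ((hfi.add hgi).div_const 2) hpt
      _ = ((∫ z, |f z| ^ p ∂μ) + ∫ z, |g z| ^ p ∂μ) / 2 := by
          rw [integral_div, integral_add hfi hgi]
      _ ≤ 1 := by linarith
  have main : IS ^ (2/p) / 4 + (p - 1) * (ID ^ (2/p) / 4) ≤ 1 := hsup.trans hRHS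
  -- identify with LpNorms
  have hsq : ∀ I : ℝ, 0 ≤ I → I ^ (2/p) = (I ^ (1/p)) ^ 2 := by
    intro I hI
    rw [← Real.rpow_natCast (I ^ (1/p)) 2, ← Real.rpow_mul hI,
      show 1/p * ((2:ℕ):ℝ) = 2/p by push_cast; ring]
  have hNS : LpNorm μ (f + g) p = IS ^ (1/p) := by
    rw [norm_eq (f + g) (hf.add hg)]
    simp only [Pi.add_apply]
    rfl
  have hND : LpNorm μ (f - g) p = ID ^ (1/p) := by
    rw [norm_eq (f - g) (hf.sub hg)]
    simp only [Pi.sub_apply]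
    rfl
  rw [hNS]
  rw [hND] at hdist
  rw [hsq IS hIS0, hsq ID hID0] at main
  have hM2 : ε ^ 2 ≤ (ID ^ (1/p)) ^ 2 := pow_le_pow_left₀ hε0 hdist 2
  have hN0 : 0 ≤ IS ^ (1/p) := Real.rpow_nonneg hIS0 _
  have hε4 : ε ^ 2 ≤ 4 := by nlinarith
  have hc1 : (1:ℝ) ≤ 2 - (p - 1) / 4 * ε ^ 2 := by nlinarith
  nlinarith [sq_nonneg ((p - 1) * ε ^ 2), sq_nonneg (IS ^ (1/p) + (2 - (p - 1) / 4 * ε ^ 2)),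
    mul_nonneg hp10 (sq_nonneg ε)]
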